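/- The following six equalities of subsets of ℤ³ hold: (1) M + ℤa₁ = {(x,y,z) ∈ ℤ³ : y ≥ 0 and z ≥ 0}; (2) M + ℤa₂ = {(x,y,z) ∈ ℤ³ : x ≥ y and z ≥ 0}; (3) M + G(a₁,a₂) = {(x,y,z) ∈ ℤ³ : z ≥ 0}; (4) M + G(a₁,a₃) = {(x,y,z) ∈ ℤ³ : y ≥ 0}; (5) M + G(a₂,a₄) = {(x,y,z) ∈ ℤ³ : x ≥ y}; (6) M + G(a₃,a₄) = {(x,y,z) ∈ ℤ³ : x ≥ z}. -/

import Mathlib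

/-!
Hartshorne's example: `a₁ = (1,0,0)`, `a₂ = (1,1,0)`, `a₃ = (1,0,1)`, `a₄ = (1,1,1)`
in `ℤ³`, `M` the submonoid they generate (so `K[M] = K[r,rs,rt,rst]`), `ℤv` the subgroup
generated by a vector `v`, and `G(v,w)` the subgroup generated by `v, w`.
-/

open Pointwise

/-- `a₁ = (1,0,0)`. -/
def a1 : Fin 3 → ℤ := ![1, 0, 0]
/-- `a₂ = (1,1,0)`. -/
def a2 : Fin 3 → ℤ := ![1, 1, 0]
/-- `a₃ = (1,0,1)`. -/
def a3 : Fin 3 → ℤ := ![1, 0, 1]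
/-- `a₄ = (1,1,1)`. -/
def a4 : Fin 3 → ℤ := ![1, 1, 1]

/-- The submonoid `M` of `ℤ³` generated by `a₁, a₂, a₃, a₄`. -/
def Mmon : AddSubmonoid (Fin 3 → ℤ) := AddSubmonoid.closure {a1, a2, a3, a4}

/-- The subgroup `ℤv` of `ℤ³` generated by `v`. -/
def Zv (v : Fin 3 → ℤ) : AddSubgroup (Fin 3 → ℤ) := AddSubgroup.closure {v}

/-- The subgroup `G(v,w)` of `ℤ³` generated by `v` and `w`. -/
def Gvw (v w : Fin 3 → ℤ) : AddSubgroup (Fin 3 → ℤ) := AddSubgroup.closure {v, w}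

lemma M_le {v : Fin 3 → ℤ} (h : v ∈ Mmon) :
    0 ≤ v 1 ∧ 0 ≤ v 2 ∧ v 1 ≤ v 0 ∧ v 2 ≤ v 0 := by
  induction h using AddSubmonoid.closure_induction with
  | mem x hx =>
      rcases hx with h | h | h | h <;> subst h <;> simp [a1, a2, a3, a4]
  | zero => simp
  | add x y hx hy ihx ihy => simp only [Pi.add_apply]; omega

lemma a1_mem : a1 ∈ Mmon := AddSubmonoid.subset_closure (by simp)
lemma a2_mem : a2 ∈ Mmon := AddSubmonoid.subset_closure (by simp)
lemma a3_mem : a3 ∈ Mmon := AddSubmonoid.subset_closure (by simp)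
lemma a4_mem : a4 ∈ Mmon := AddSubmonoid.subset_closure (by simp)

lemma G_le {v w u : Fin 3 → ℤ} (f : AddMonoidHom (Fin 3 → ℤ) ℤ)
    (hv : f v = 0) (hw : f w = 0) (h : u ∈ Gvw v w) : f u = 0 := by
  induction h using AddSubgroup.closure_induction with
  | mem x hx => rcases hx with h | h <;> subst h <;> assumption
  | zero => simp
  | add x y hx hy ihx ihy => simp [map_add, ihx, ihy]
  | neg x hx ihx => simp [map_neg, ihx]

lemma Z_le {v u : Fin 3 → ℤ} (f : AddMonoidHom (Fin 3 → ℤ) ℤ)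
    (hv : f v = 0) (h : u ∈ Zv v) : f u = 0 := by
  induction h using AddSubgroup.closure_induction with
  | mem x hx => simp only [Set.mem_singleton_iff] at hx; subst hx; assumption
  | zero => simp
  | add x y hx hy ihx ihy => simp [map_add, ihx, ihy]
  | neg x hx ihx => simp [map_neg, ihx]

def ev (i : Fin 3) : AddMonoidHom (Fin 3 → ℤ) ℤ := Pi.evalAddMonoidHom _ i
def d01 : AddMonoidHom (Fin 3 → ℤ) ℤ := (ev 0) - (ev 1)
def d02 : AddMonoidHom (Fin 3 → ℤ) ℤ := (ev 0) - (ev 2)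

lemma eq1 : ((Mmon : Set (Fin 3 → ℤ)) + (Zv a1 : Set (Fin 3 → ℤ))
    = {x | 0 ≤ x 1 ∧ 0 ≤ x 2}) := by
  ext v
  simp only [Set.mem_add, SetLike.mem_coe, Set.mem_setOf_eq]
  constructor
  · rintro ⟨m, hm, g, hg, rfl⟩
    have h1 := M_le hm
    have h2 := Z_le (ev 1) (by simp [ev, a1]) hg
    have h3 := Z_le (ev 2) (by simp [ev, a1]) hg
    simp only [ev, Pi.evalAddMonoidHom_apply] at h2 h3
    simp only [Pi.add_apply]; omega
  · rintro ⟨h1, h2⟩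
    refine ⟨(v 1).toNat • a2 + (v 2).toNat • a3,
      AddSubmonoid.add_mem _ (AddSubmonoid.nsmul_mem _ a2_mem _)
        (AddSubmonoid.nsmul_mem _ a3_mem _),
      (v 0 - v 1 - v 2) • a1,
      AddSubgroup.zsmul_mem _ (AddSubgroup.subset_closure (Set.mem_singleton _)) _, ?_⟩
    funext i; fin_cases i <;>
      simp [a1, a2, a3, Int.toNat_of_nonneg h1, Int.toNat_of_nonneg h2]

lemma eq2 : ((Mmon : Set (Fin 3 → ℤ)) + (Zv a2 : Set (Fin 3 → ℤ))
    = {x | x 1 ≤ x 0 ∧ 0 ≤ x 2}) := by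
  ext v
  simp only [Set.mem_add, SetLike.mem_coe, Set.mem_setOf_eq]
  constructor
  · rintro ⟨m, hm, g, hg, rfl⟩
    have h1 := M_le hm
    have h2 := Z_le d01 (by simp [d01, ev, a2]) hg
    have h3 := Z_le (ev 2) (by simp [ev, a2]) hg
    simp only [d01, ev, AddMonoidHom.sub_apply, Pi.evalAddMonoidHom_apply] at h2 h3
    simp only [Pi.add_apply]; omega
  · rintro ⟨h1, h2⟩
    refine ⟨(v 0 - v 1).toNat • a1 + (v 2).toNat • a4,
      AddSubmonoid.add_mem _ (AddSubmonoid.nsmul_mem _ a1_mem _)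
        (AddSubmonoid.nsmul_mem _ a4_mem _),
      (v 1 - v 2) • a2,
      AddSubgroup.zsmul_mem _ (AddSubgroup.subset_closure (Set.mem_singleton _)) _, ?_⟩
    funext i; fin_cases i <;>
      simp [a1, a2, a4, Int.toNat_of_nonneg h2,
        Int.toNat_of_nonneg (by omega : (0:ℤ) ≤ v 0 - v 1)]

lemma eq3 : ((Mmon : Set (Fin 3 → ℤ)) + (Gvw a1 a2 : Set (Fin 3 → ℤ))
    = {x | 0 ≤ x 2}) := by
  ext v
  simp only [Set.mem_add, SetLike.mem_coe, Set.mem_setOf_eq]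
  constructor
  · rintro ⟨m, hm, g, hg, rfl⟩
    have h1 := M_le hm
    have h3 := G_le (ev 2) (by simp [ev, a1]) (by simp [ev, a2]) hg
    simp only [ev, Pi.evalAddMonoidHom_apply] at h3
    simp only [Pi.add_apply]; omega
  · intro h2
    refine ⟨(v 2).toNat • a4, AddSubmonoid.nsmul_mem _ a4_mem _,
      (v 0 - v 1) • a1 + (v 1 - v 2) • a2,
      AddSubgroup.add_mem _
        (AddSubgroup.zsmul_mem _ (AddSubgroup.subset_closure (by simp)) _)
        (AddSubgroup.zsmul_mem _ (AddSubgroup.subset_closure (by simp)) _), ?_⟩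
    funext i; fin_cases i <;> simp [a1, a2, a4, Int.toNat_of_nonneg h2]

lemma eq4 : ((Mmon : Set (Fin 3 → ℤ)) + (Gvw a1 a3 : Set (Fin 3 → ℤ))
    = {x | 0 ≤ x 1}) := by
  ext v
  simp only [Set.mem_add, SetLike.mem_coe, Set.mem_setOf_eq]
  constructor
  · rintro ⟨m, hm, g, hg, rfl⟩
    have h1 := M_le hm
    have h3 := G_le (ev 1) (by simp [ev, a1]) (by simp [ev, a3]) hg
    simp only [ev, Pi.evalAddMonoidHom_apply] at h3
    simp only [Pi.add_apply]; omega
  · intro h1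
    refine ⟨(v 1).toNat • a2, AddSubmonoid.nsmul_mem _ a2_mem _,
      (v 0 - v 1 - v 2) • a1 + (v 2) • a3,
      AddSubgroup.add_mem _
        (AddSubgroup.zsmul_mem _ (AddSubgroup.subset_closure (by simp)) _)
        (AddSubgroup.zsmul_mem _ (AddSubgroup.subset_closure (by simp)) _), ?_⟩
    funext i; fin_cases i <;> simp [a1, a2, a3, Int.toNat_of_nonneg h1]

lemma eq5 : ((Mmon : Set (Fin 3 → ℤ)) + (Gvw a2 a4 : Set (Fin 3 → ℤ))
    = {x | x 1 ≤ x 0}) := by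
  ext v
  simp only [Set.mem_add, SetLike.mem_coe, Set.mem_setOf_eq]
  constructor
  · rintro ⟨m, hm, g, hg, rfl⟩
    have h1 := M_le hm
    have h3 := G_le d01 (by simp [d01, ev, a2]) (by simp [d01, ev, a4]) hg
    simp only [d01, ev, AddMonoidHom.sub_apply, Pi.evalAddMonoidHom_apply] at h3
    simp only [Pi.add_apply]; omega
  · intro h1
    refine ⟨(v 0 - v 1).toNat • a1, AddSubmonoid.nsmul_mem _ a1_mem _,
      (v 1 - v 2) • a2 + (v 2) • a4,
      AddSubgroup.add_mem _
        (AddSubgroup.zsmul_mem _ (AddSubgroup.subset_closure (by simp)) _)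
        (AddSubgroup.zsmul_mem _ (AddSubgroup.subset_closure (by simp)) _), ?_⟩
    funext i; fin_cases i <;>
      simp [a1, a2, a4, Int.toNat_of_nonneg (by omega : (0:ℤ) ≤ v 0 - v 1)]

lemma eq6 : ((Mmon : Set (Fin 3 → ℤ)) + (Gvw a3 a4 : Set (Fin 3 → ℤ))
    = {x | x 2 ≤ x 0}) := by
  ext v
  simp only [Set.mem_add, SetLike.mem_coe, Set.mem_setOf_eq]
  constructor
  · rintro ⟨m, hm, g, hg, rfl⟩
    have h1 := M_le hm
    have h3 := G_le d02 (by simp [d02, ev, a3]) (by simp [d02, ev, a4]) hg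
    simp only [d02, ev, AddMonoidHom.sub_apply, Pi.evalAddMonoidHom_apply] at h3
    simp only [Pi.add_apply]; omega
  · intro h1
    refine ⟨(v 0 - v 2).toNat • a1, AddSubmonoid.nsmul_mem _ a1_mem _,
      (v 2 - v 1) • a3 + (v 1) • a4,
      AddSubgroup.add_mem _
        (AddSubgroup.zsmul_mem _ (AddSubgroup.subset_closure (by simp)) _)
        (AddSubgroup.zsmul_mem _ (AddSubgroup.subset_closure (by simp)) _), ?_⟩
    funext i; fin_cases i <;>
      simp [a1, a3, a4, Int.toNat_of_nonneg (by omega : (0:ℤ) ≤ v 0 - v 2)]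

/-- The six equalities of subsets of `ℤ³`:
`M + ℤa₁ = {y ≥ 0, z ≥ 0}`, `M + ℤa₂ = {x ≥ y, z ≥ 0}`, `M + G(a₁,a₂) = {z ≥ 0}`,
`M + G(a₁,a₃) = {y ≥ 0}`, `M + G(a₂,a₄) = {x ≥ y}`, `M + G(a₃,a₄) = {x ≥ z}`. -/
theorem hartshorne_sector_data :
    ((Mmon : Set (Fin 3 → ℤ)) + (Zv a1 : Set (Fin 3 → ℤ))
        = {x | 0 ≤ x 1 ∧ 0 ≤ x 2}) ∧
    ((Mmon : Set (Fin 3 → ℤ)) + (Zv a2 : Set (Fin 3 → ℤ))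
        = {x | x 1 ≤ x 0 ∧ 0 ≤ x 2}) ∧
    ((Mmon : Set (Fin 3 → ℤ)) + (Gvw a1 a2 : Set (Fin 3 → ℤ)) = {x | 0 ≤ x 2}) ∧
    ((Mmon : Set (Fin 3 → ℤ)) + (Gvw a1 a3 : Set (Fin 3 → ℤ)) = {x | 0 ≤ x 1}) ∧
    ((Mmon : Set (Fin 3 → ℤ)) + (Gvw a2 a4 : Set (Fin 3 → ℤ)) = {x | x 1 ≤ x 0}) ∧
    ((Mmon : Set (Fin 3 → ℤ)) + (Gvw a3 a4 : Set (Fin 3 → ℤ)) = {x | x 2 ≤ x 0}) := by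
  exact ⟨eq1, eq2, eq3, eq4, eq5, eq6⟩
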